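/- If b > a > r ≥ |z| for a complex number z and positive reals a, b, r, then |1/((a+z)(b−z))| ≤ 1/((a−r)(b+r)). -/

import Mathlib

theorem stmt3 (a b r : ℝ) (z : ℂ) (hba : b > a) (har : a > r) (hr : 0 < r)
    (hz : ‖z‖ ≤ r) :
    ‖(1 / (((a:ℂ) + z) * ((b:ℂ) - z)))‖ ≤ 1 / ((a - r) * (b + r)) := by
  have hx : |z.re| ≤ r := (Complex.abs_re_le_norm z).trans hz
  have hx1 : -r ≤ z.re := (abs_le.1 hx).1
  have hx2 : z.re ≤ r := (abs_le.1 hx).2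
  have h1 : a + z.re ≤ ‖((a:ℂ) + z)‖ := by
    have := Complex.re_le_norm ((a:ℂ) + z)
    simpa using this
  have h2 : b - z.re ≤ ‖((b:ℂ) - z)‖ := by
    have := Complex.re_le_norm ((b:ℂ) - z)
    simpa using this
  have hpos : 0 < (a - r) * (b + r) := by nlinarith
  have hprod : (a - r) * (b + r) ≤ ‖(((a:ℂ) + z) * ((b:ℂ) - z))‖ := by
    rw [norm_mul]
    have hA : (0:ℝ) < a + z.re := by nlinarith
    have hB : (0:ℝ) < b - z.re := by nlinarith
    calc (a - r) * (b + r) ≤ (a + z.re) * (b - z.re) := by nlinarith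
    _ ≤ ‖((a:ℂ) + z)‖ * ‖((b:ℂ) - z)‖ := by
        apply mul_le_mul h1 h2 (le_of_lt hB) (norm_nonneg _)
  rw [norm_div, norm_one]
  exact one_div_le_one_div_of_le hpos hprod
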